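/- Let T : R^n → R^n with fixed point v*, H a positive definite diagonal matrix, and Ω a random diagonal matrix whose diagonal blocks are each either the identity or zero, with E[Ω] = Ω̄ ≻ 0 and with minimum activation probability p_min = min over blocks of P(block active). Suppose ‖Tv - v*‖²_H ≤ (1/(1+η))‖v - v*‖²_H for all v. Then the random iterate v⁺ = v + Ω(Tv - v) satisfies E‖v⁺ - v*‖²_{H Ω̄^{-1}} ≤ (1 - p_min·η/(1+η))‖v - v*‖²_{H Ω̄^{-1}}. -/

import Mathlib

open Matrix Finset

/-- Asynchronous linear convergence: with a random block-diagonal activation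
matrix `Ω` (each diagonal entry `0` or `1`), mean activation `Ω̄ = E[Ω] ≻ 0`
with minimum activation probability `pmin`, a positive diagonal matrix `H`,
and a map `T` with fixed point `v*` contracting in `‖·‖²_H` with factor
`1/(1+η)`, the random iterate `v⁺ = v + Ω(Tv - v)` satisfies
`E‖v⁺ - v*‖²_{HΩ̄⁻¹} ≤ (1 - pmin η/(1+η))‖v - v*‖²_{HΩ̄⁻¹}`. -/
theorem asynchronous_linear_convergence {n : ℕ} [NeZero n]
    {ι : Type*} [Fintype ι] [Nonempty ι]
    (prob : ι → ℝ) (hprob : ∀ ω, 0 ≤ prob ω) (hsum : ∑ ω, prob ω = 1)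
    (d : ι → Fin n → ℝ) (hd : ∀ ω i, d ω i = 0 ∨ d ω i = 1)
    (Ω : ι → Matrix (Fin n) (Fin n) ℝ)
    (hΩ : ∀ ω, Ω ω = Matrix.diagonal (d ω))
    (Ωbar : Matrix (Fin n) (Fin n) ℝ)
    (hΩbar : Ωbar = ∑ ω, prob ω • Ω ω)
    (pmin : ℝ) (hpmin_pos : 0 < pmin)
    (hpmin_le : ∀ i, pmin ≤ ∑ ω, prob ω * d ω i)
    (hpmin_min : ∃ i, pmin = ∑ ω, prob ω * d ω i)
    (Hd : Fin n → ℝ) (hHd : ∀ i, 0 < Hd i)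
    (T : (Fin n → ℝ) → (Fin n → ℝ)) (vstar : Fin n → ℝ)
    (hfix : T vstar = vstar)
    (η : ℝ) (hη : 0 < η)
    (hcontract : ∀ v,
      (T v - vstar) ⬝ᵥ (Matrix.diagonal Hd).mulVec (T v - vstar) ≤
        (1 / (1 + η)) * ((v - vstar) ⬝ᵥ (Matrix.diagonal Hd).mulVec (v - vstar)))
    (v : Fin n → ℝ) :
    ∑ ω, prob ω *
        ((v + (Ω ω).mulVec (T v - v) - vstar) ⬝ᵥ
          ((Matrix.diagonal Hd) * Ωbar⁻¹).mulVec
            (v + (Ω ω).mulVec (T v - v) - vstar)) ≤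
      (1 - pmin * η / (1 + η)) *
        ((v - vstar) ⬝ᵥ ((Matrix.diagonal Hd) * Ωbar⁻¹).mulVec (v - vstar)) := by

  have hp_pos : ∀ i, (0:ℝ) < ∑ ω, prob ω * d ω i :=
    fun i => lt_of_lt_of_le hpmin_pos (hpmin_le i)
  set p : Fin n → ℝ := fun i => ∑ ω, prob ω * d ω i with hp_def
  have hp_ne : ∀ i, p i ≠ 0 := fun i => (hp_pos i).ne'
  have hΩbar' : Ωbar = Matrix.diagonal p := by
    subst hΩbar
    ext i j
    by_cases h : i = j
    · subst h
      simp [hΩ, Matrix.sum_apply, Matrix.diagonal_apply, hp_def]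
    · simp [hΩ, Matrix.sum_apply, Matrix.diagonal_apply, h]
  have hinv : Ωbar⁻¹ = Matrix.diagonal (fun i => (p i)⁻¹) := by
    rw [hΩbar']
    apply Matrix.inv_eq_right_inv
    rw [Matrix.diagonal_mul_diagonal]
    have : (fun i => p i * (p i)⁻¹) = fun _ => (1:ℝ) :=
      funext fun i => mul_inv_cancel₀ (hp_ne i)
    rw [this, Matrix.diagonal_one]
  have hM : Matrix.diagonal Hd * Ωbar⁻¹ = Matrix.diagonal (fun i => Hd i * (p i)⁻¹) := by
    rw [hinv, Matrix.diagonal_mul_diagonal]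
  have quad : ∀ (w x : Fin n → ℝ),
      x ⬝ᵥ (Matrix.diagonal w).mulVec x = ∑ i, w i * x i ^ 2 := by
    intro w x
    simp only [dotProduct, Matrix.mulVec_diagonal]
    exact Finset.sum_congr rfl fun i _ => by ring
  set e : Fin n → ℝ := v - vstar with he
  set r : Fin n → ℝ := T v - v with hr
  have hx : ∀ ω, v + (Ω ω).mulVec (T v - v) - vstar = fun i => e i + d ω i * r i := by
    intro ω
    funext i
    simp [hΩ, Matrix.mulVec_diagonal, he, hr]
    ring
  have key : ∀ i, ∑ ω, prob ω * ((Hd i * (p i)⁻¹) * (e i + d ω i * r i) ^ 2)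
      = Hd i * (p i)⁻¹ * e i ^ 2 + Hd i * (2 * e i * r i + r i ^ 2) := by
    intro i
    have hsq : ∀ ω, (e i + d ω i * r i) ^ 2
        = e i ^ 2 + d ω i * (2 * e i * r i + r i ^ 2) := by
      intro ω
      rcases hd ω i with h | h <;> rw [h] <;> ring
    have hpi : p i = ∑ ω, prob ω * d ω i := rfl
    calc ∑ ω, prob ω * ((Hd i * (p i)⁻¹) * (e i + d ω i * r i) ^ 2)
        = ∑ ω, (prob ω * (Hd i * (p i)⁻¹ * e i ^ 2)
            + (prob ω * d ω i) * (Hd i * (p i)⁻¹ * (2 * e i * r i + r i ^ 2))) := by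
          refine Finset.sum_congr rfl fun ω _ => ?_
          rw [hsq ω]; ring
      _ = (∑ ω, prob ω) * (Hd i * (p i)⁻¹ * e i ^ 2)
            + (∑ ω, prob ω * d ω i) * (Hd i * (p i)⁻¹ * (2 * e i * r i + r i ^ 2)) := by
          rw [Finset.sum_add_distrib, ← Finset.sum_mul, ← Finset.sum_mul]
      _ = Hd i * (p i)⁻¹ * e i ^ 2 + Hd i * (2 * e i * r i + r i ^ 2) := by
          rw [hsum, ← hpi, one_mul]
          field_simp
          rw [div_add' _ _ _ (hp_ne i)]; ring
  have hLHS : ∑ ω, prob ω *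
        ((v + (Ω ω).mulVec (T v - v) - vstar) ⬝ᵥ
          ((Matrix.diagonal Hd) * Ωbar⁻¹).mulVec
            (v + (Ω ω).mulVec (T v - v) - vstar))
      = ∑ i, Hd i * (p i)⁻¹ * e i ^ 2 + ∑ i, Hd i * (2 * e i * r i + r i ^ 2) := by
    rw [hM, ← Finset.sum_add_distrib]
    calc ∑ ω, prob ω *
          ((v + (Ω ω).mulVec (T v - v) - vstar) ⬝ᵥ
            (Matrix.diagonal fun i => Hd i * (p i)⁻¹).mulVec
              (v + (Ω ω).mulVec (T v - v) - vstar))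
        = ∑ ω, ∑ i, prob ω * ((Hd i * (p i)⁻¹) * (e i + d ω i * r i) ^ 2) := by
          refine Finset.sum_congr rfl fun ω _ => ?_
          rw [hx ω, quad, Finset.mul_sum]
      _ = ∑ i, ∑ ω, prob ω * ((Hd i * (p i)⁻¹) * (e i + d ω i * r i) ^ 2) :=
          Finset.sum_comm
      _ = ∑ i, (Hd i * (p i)⁻¹ * e i ^ 2 + Hd i * (2 * e i * r i + r i ^ 2)) :=
          Finset.sum_congr rfl fun i _ => key i
  have hRHS : (v - vstar) ⬝ᵥ ((Matrix.diagonal Hd) * Ωbar⁻¹).mulVec (v - vstar)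
      = ∑ i, Hd i * (p i)⁻¹ * e i ^ 2 := by
    rw [hM, quad]
  have hQe : (v - vstar) ⬝ᵥ (Matrix.diagonal Hd).mulVec (v - vstar)
      = ∑ i, Hd i * e i ^ 2 := quad Hd e
  have hQT : (T v - vstar) ⬝ᵥ (Matrix.diagonal Hd).mulVec (T v - vstar)
      = ∑ i, Hd i * (e i + r i) ^ 2 := by
    have : T v - vstar = fun i => e i + r i := by
      funext i; simp [he, hr]
    rw [this, quad]
  set A := ∑ i, Hd i * (p i)⁻¹ * e i ^ 2 with hA
  set Qe := ∑ i, Hd i * e i ^ 2 with hQedef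
  set QT := ∑ i, Hd i * (e i + r i) ^ 2 with hQTdef
  have hcross : ∑ i, Hd i * (2 * e i * r i + r i ^ 2) = QT - Qe := by
    rw [hQTdef, hQedef, ← Finset.sum_sub_distrib]
    exact Finset.sum_congr rfl fun i _ => by ring
  have hcon : QT ≤ (1 / (1 + η)) * Qe := by
    have := hcontract v
    rw [hQT, hQe] at this
    exact this
  have h1η : (0:ℝ) < 1 + η := by linarith
  have hpA : pmin * A ≤ Qe := by
    rw [hA, hQedef, Finset.mul_sum]
    refine Finset.sum_le_sum fun i _ => ?_
    have h1 : pmin * (p i)⁻¹ ≤ 1 := by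
      rw [← mul_inv_cancel₀ (hp_ne i)]
      exact mul_le_mul_of_nonneg_right (hpmin_le i) (inv_nonneg.2 (hp_pos i).le)
    have h2 : (0:ℝ) ≤ Hd i * e i ^ 2 := mul_nonneg (hHd i).le (sq_nonneg _)
    nlinarith [mul_le_mul_of_nonneg_right h1 h2]
  rw [hLHS, hRHS, hcross]
  have hfrac : (0:ℝ) ≤ η / (1 + η) := by positivity
  have step1 : QT - Qe ≤ -(η / (1 + η)) * Qe := by
    have : (1 / (1 + η)) * Qe - Qe = -(η / (1 + η)) * Qe := by
      field_simp; ring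
    linarith
  have step2 : -(η / (1 + η)) * Qe ≤ -(η / (1 + η)) * (pmin * A) := by
    have := mul_le_mul_of_nonneg_left hpA hfrac
    linarith
  have hring : -(η / (1 + η)) * (pmin * A) = -(pmin * η / (1 + η)) * A := by ring
  rw [hring] at step2
  linarith
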